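/- Fix Λ ∈ ℕ, subclasses F_1,...,F_Λ ⊆ F, and (x,y) ∈ X × [0,1]. Set δ := |y − SOA(F_{1:Λ})(x)| and let λ be Λ+1 if δ ≤ α_Λ and otherwise the smallest index with δ > α_λ. Then at least one of the following holds: (i) δ ≤ α_Λ and cutoff(F_{1:Λ},x) = Λ; or (ii) there exists λ' with min{cutoff(F_{1:Λ},x)+1, λ} ≤ λ' ≤ min{cutoff(F_{1:Λ},x)+1, Λ} such that |SOA_{α_{λ'}}(F_{λ'})(x) − y| > α_{λ'} ≥ δ/16. -/
import Mathlib


open Classical in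
/-- The cutoff point of the hierarchical aggregation rule: the smallest `l` with
`1 ≤ l < Λ` and `|g l - g (l+1)| > 2·2^{-l}`, or `Λ` if no such `l` exists. -/
noncomputable def cutoff (Λ : ℕ) (g : ℕ → ℝ) : ℕ :=
  if h : ∃ l, (1 ≤ l ∧ l < Λ) ∧ 2 * ((2:ℝ) ^ l)⁻¹ < |g l - g (l + 1)| then Nat.find h else Λ

open Classical in
/-- `lamOf Λ δ` is `Λ+1` if `δ ≤ 2^{-Λ}`, and otherwise the smallest `λ` with `δ > 2^{-λ}`. -/
noncomputable def lamOf (Λ : ℕ) (δ : ℝ) : ℕ :=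
  if δ ≤ ((2:ℝ) ^ Λ)⁻¹ then Λ + 1
  else if h : ∃ l, ((2:ℝ) ^ l)⁻¹ < δ then Nat.find h else Λ + 1

lemma pw_mono {a b : ℕ} (h : a ≤ b) : ((2:ℝ)^b)⁻¹ ≤ ((2:ℝ)^a)⁻¹ := by
  apply inv_anti₀ (by positivity)
  exact pow_le_pow_right₀ one_le_two h

lemma inv_pow_succ (n : ℕ) : ((2:ℝ)^(n+1))⁻¹ = ((2:ℝ)^n)⁻¹ / 2 := by
  rw [pow_succ]
  rw [mul_inv]
  ring

lemma cutoff_le (Λ : ℕ) (g : ℕ → ℝ) : cutoff Λ g ≤ Λ := by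
  rw [cutoff]
  split
  · next h => exact le_of_lt (Nat.find_spec h).1.2
  · exact le_rfl

lemma cutoff_pos (Λ : ℕ) (hΛ : 1 ≤ Λ) (g : ℕ → ℝ) : 1 ≤ cutoff Λ g := by
  rw [cutoff]
  split
  · next h => exact (Nat.find_spec h).1.1
  · exact hΛ

lemma cutoff_min (Λ : ℕ) (g : ℕ → ℝ) (j : ℕ) (h1 : 1 ≤ j) (h2 : j < cutoff Λ g) :
    |g j - g (j+1)| ≤ 2 * ((2:ℝ)^j)⁻¹ := by
  have hjΛ : j < Λ := lt_of_lt_of_le h2 (cutoff_le Λ g)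
  rw [cutoff] at h2
  split at h2
  · next h =>
    have := Nat.find_min h h2
    push_neg at this
    exact this ⟨h1, hjΛ⟩
  · next h =>
    push_neg at h
    exact h j ⟨h1, hjΛ⟩

lemma cutoff_spec (Λ : ℕ) (g : ℕ → ℝ) (h : cutoff Λ g < Λ) :
    2 * ((2:ℝ)^(cutoff Λ g))⁻¹ < |g (cutoff Λ g) - g (cutoff Λ g + 1)| := by
  by_cases hh : ∃ l, (1 ≤ l ∧ l < Λ) ∧ 2 * ((2:ℝ) ^ l)⁻¹ < |g l - g (l + 1)|
  · rw [cutoff, dif_pos hh] at *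
    exact (Nat.find_spec hh).2
  · rw [cutoff, dif_neg hh] at h
    exact absurd h (lt_irrefl Λ)

lemma chain (Λ : ℕ) (g : ℕ → ℝ) :
    ∀ n l, 1 ≤ l → l + n = cutoff Λ g →
      |g l - g (cutoff Λ g)| ≤ 4 * ((2:ℝ)^l)⁻¹ - 4 * ((2:ℝ)^(cutoff Λ g))⁻¹ := by
  intro n
  induction n with
  | zero =>
    intro l h1 h2
    simp only [Nat.add_zero] at h2
    rw [← h2]
    simp
  | succ n ih =>
    intro l h1 h2
    have hl : l < cutoff Λ g := by omega
    have h3 : |g l - g (l+1)| ≤ 2 * ((2:ℝ)^l)⁻¹ := cutoff_min Λ g l h1 hl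
    have h4 := ih (l+1) (by omega) (by omega)
    have h5 : |g l - g (cutoff Λ g)| ≤ |g l - g (l+1)| + |g (l+1) - g (cutoff Λ g)| :=
      abs_sub_le _ _ _
    have h6 : ((2:ℝ)^(l+1))⁻¹ = ((2:ℝ)^l)⁻¹ / 2 := inv_pow_succ l
    linarith

/-- abstract form of Lemma real-pot-dec: for `g_1,…,g_Λ ∈ [0,1]` with
cutoff point `λ̄ = cutoff Λ g` and `y ∈ [0,1]`, setting `δ := |y − g_{λ̄}|` and
`λ := lamOf Λ δ`, either `δ ≤ 2^{-Λ}` and `λ̄ = Λ`, or there is `λ'` with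
`min(λ̄+1, λ) ≤ λ' ≤ min(λ̄+1, Λ)` such that `|g_{λ'} − y| > 2^{-λ'} ≥ δ/16`. -/
theorem stmt14 (Λ : ℕ) (hΛ : 1 ≤ Λ) (g : ℕ → ℝ)
    (hg : ∀ l, 1 ≤ l → l ≤ Λ → g l ∈ Set.Icc (0:ℝ) 1)
    (y : ℝ) (hy : y ∈ Set.Icc (0:ℝ) 1) :
    (|y - g (cutoff Λ g)| ≤ ((2:ℝ) ^ Λ)⁻¹ ∧ cutoff Λ g = Λ) ∨
    ∃ l : ℕ, min (cutoff Λ g + 1) (lamOf Λ |y - g (cutoff Λ g)|) ≤ l ∧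
      l ≤ min (cutoff Λ g + 1) Λ ∧
      ((2:ℝ) ^ l)⁻¹ < |g l - y| ∧ |y - g (cutoff Λ g)| / 16 ≤ ((2:ℝ) ^ l)⁻¹ := by
  set c := cutoff Λ g with hc
  have hcle : c ≤ Λ := cutoff_le Λ g
  have hcpos : 1 ≤ c := cutoff_pos Λ hΛ g
  set δ := |y - g c| with hδdef
  have hδ0 : 0 ≤ δ := abs_nonneg _
  have hδ1 : δ ≤ 1 := by
    obtain ⟨hg0, hg1⟩ := hg c hcpos hcle
    obtain ⟨hy0, hy1⟩ := hy
    rw [hδdef, abs_sub_le_iff]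
    constructor <;> linarith
  by_cases hsmall : δ ≤ ((2:ℝ)^Λ)⁻¹
  · -- small δ case
    by_cases hcΛ : c = Λ
    · exact Or.inl ⟨hsmall, hcΛ⟩
    · right
      have hclt : c < Λ := lt_of_le_of_ne hcle hcΛ
      have hcut := cutoff_spec Λ g hclt
      have hΛc : ((2:ℝ)^Λ)⁻¹ ≤ ((2:ℝ)^(c+1))⁻¹ := pw_mono hclt
      have habs : |g c - g (c+1)| ≤ δ + |g (c+1) - y| := by
        have : |g c - g (c+1)| ≤ |g c - y| + |y - g (c+1)| := abs_sub_le _ _ _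
        have e1 : |g c - y| = δ := by rw [hδdef, abs_sub_comm]
        have e2 : |y - g (c+1)| = |g (c+1) - y| := abs_sub_comm _ _
        linarith [this, e1.le, e2.le]
      have hps : ((2:ℝ)^(c+1))⁻¹ = ((2:ℝ)^c)⁻¹ / 2 := inv_pow_succ c
      refine ⟨c+1, min_le_left _ _, le_min le_rfl hclt, ?_, ?_⟩
      · linarith
      · linarith
  · -- large δ case
    right
    push_neg at hsmall
    have hex : ∃ l, ((2:ℝ) ^ l)⁻¹ < δ := ⟨Λ, hsmall⟩
    have hlam : lamOf Λ δ = Nat.find hex := by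
      rw [lamOf, if_neg (not_le.mpr hsmall), dif_pos hex]
    set lam := Nat.find hex with hlamdef
    have hl : ((2:ℝ)^lam)⁻¹ < δ := Nat.find_spec hex
    have hlΛ : lam ≤ Λ := Nat.find_min' hex hsmall
    have hl1 : 1 ≤ lam := by
      by_contra h
      have : lam = 0 := by omega
      rw [this] at hl
      simp at hl
      linarith
    have hmin : δ ≤ ((2:ℝ)^(lam-1))⁻¹ := by
      have := Nat.find_min hex (show lam - 1 < lam by omega)
      push_neg at this
      exact this
    have hmin2 : δ ≤ 2 * ((2:ℝ)^lam)⁻¹ := by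
      have e : lam = (lam - 1) + 1 := by omega
      have := inv_pow_succ (lam - 1)
      rw [← e] at this
      linarith
    rw [hlam]
    by_cases hcase : c + 1 ≤ lam
    · -- cutoff triggered early, use l = c+1
      have hclt : c < Λ := lt_of_lt_of_le (by omega) hlΛ
      have hcut := cutoff_spec Λ g hclt
      have hps : ((2:ℝ)^(c+1))⁻¹ = ((2:ℝ)^c)⁻¹ / 2 := inv_pow_succ c
      have hmono : ((2:ℝ)^lam)⁻¹ ≤ ((2:ℝ)^(c+1))⁻¹ := pw_mono hcase
      have habs : |g c - g (c+1)| ≤ δ + |g (c+1) - y| := by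
        have h1 : |g c - g (c+1)| ≤ |g c - y| + |y - g (c+1)| := abs_sub_le _ _ _
        have e1 : |g c - y| = δ := by rw [hδdef, abs_sub_comm]
        have e2 : |y - g (c+1)| = |g (c+1) - y| := abs_sub_comm _ _
        linarith [h1, e1.le, e2.le]
      refine ⟨c+1, min_le_left _ _, le_min le_rfl hclt, ?_, ?_⟩
      · linarith
      · linarith
    · push_neg at hcase
      have hlamc : lam ≤ c := by omega
      by_cases hB : c ≤ lam + 3
      · -- use l = c
        have hmono : ((2:ℝ)^c)⁻¹ ≤ ((2:ℝ)^lam)⁻¹ := pw_mono hlamc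
        have hmono2 : ((2:ℝ)^(lam+3))⁻¹ ≤ ((2:ℝ)^c)⁻¹ := pw_mono hB
        have he3 : ((2:ℝ)^(lam+3))⁻¹ = ((2:ℝ)^lam)⁻¹ / 8 := by
          rw [inv_pow_succ, inv_pow_succ, inv_pow_succ]
          ring
        refine ⟨c, le_trans (min_le_right _ _) hlamc, le_min (by omega) hcle, ?_, ?_⟩
        · have : |g c - y| = δ := by rw [hδdef, abs_sub_comm]
          rw [this]
          linarith
        · linarith
      · -- use l = lam + 3
        push_neg at hB
        have hl3 : lam + 3 ≤ c := by omega
        have he3 : ((2:ℝ)^(lam+3))⁻¹ = ((2:ℝ)^lam)⁻¹ / 8 := by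
          rw [inv_pow_succ, inv_pow_succ, inv_pow_succ]
          ring
        have hchain := chain Λ g (c - (lam+3)) (lam+3) (by omega) (by rw [← hc]; omega)
        rw [← hc] at hchain
        have hpowc : (0:ℝ) < ((2:ℝ)^c)⁻¹ := by positivity
        refine ⟨lam+3, le_trans (min_le_right _ _) (by omega), le_min (by omega) (by omega), ?_, ?_⟩
        · by_contra hcon
          push_neg at hcon
          have htri : δ ≤ |y - g (lam+3)| + |g (lam+3) - g c| := by
            have := abs_sub_le y (g (lam+3)) (g c)
            rw [← hδdef] at this
            exact this
          have e2 : |y - g (lam+3)| = |g (lam+3) - y| := abs_sub_comm _ _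
          -- δ ≤ 2^{-(lam+3)} + 4·2^{-(lam+3)} = 5·2^{-lam}/8 < 5δ/8 < δ
          have : δ ≤ 5 * (((2:ℝ)^lam)⁻¹ / 8) := by linarith
          linarith
        · linarith
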